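/- arXiv:2009.04942 — 2 statements merged into one kernel-verified Lean document; each statement's English description precedes it below -/
import Mathlib

section
/- Let W ⊆ ℝ^n be a linear subspace and c, d, d̃ ∈ ℝ^n. Suppose (x̃, s) is an optimal solution to Primal-Dual(W, d̃, c), and suppose the primal program of Primal-Dual(W,d,c) is feasible. Let R := {i ∈ {1,…,n} : x̃_i > (κ_W + 1)‖d − d̃‖₁}. Then every dual optimal solution s* to Primal-Dual(W,d,c) (that is, every s* ∈ W^⊥ + c with s* ≥ 0 maximizing ⟨d, c−s⟩ over the dual feasible set) satisfies s*_R = 0. -/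
open scoped BigOperators

variable {ι : Type*} [Fintype ι] [DecidableEq ι]

/-- The ℓ₁ norm of a vector. -/
noncomputable def norm1 (x : ι → ℝ) : ℝ := ∑ i, |x i|

/-- The ℓ∞ norm of a vector. -/
noncomputable def normInf (x : ι → ℝ) : ℝ := ⨆ i, |x i|

/-- The ℓ₂ norm of a vector. -/
noncomputable def norm2 (x : ι → ℝ) : ℝ := Real.sqrt (∑ i, (x i) ^ 2)

/-- The componentwise negative part `max (-x) 0`. -/
noncomputable def vneg (x : ι → ℝ) : ι → ℝ := fun i => max (-(x i)) 0

/-- The componentwise positive part `max x 0`. -/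
noncomputable def vpos (x : ι → ℝ) : ι → ℝ := fun i => max (x i) 0

/-- `y` is sign-consistent with `x`. -/
def SignConsistent (y x : ι → ℝ) : Prop :=
  (∀ i, 0 ≤ x i * y i) ∧ ∀ i, x i = 0 → y i = 0

/-- The subspace `ℝ^n_C` of vectors supported on `C`. -/
def coordSubspace (C : Set ι) : Submodule ℝ (ι → ℝ) where
  carrier := {x | ∀ i ∉ C, x i = 0}
  zero_mem' := by intro i _; rfl
  add_mem' := by intro a b ha hb i hi; simp [ha i hi, hb i hi]
  smul_mem' := by intro c a ha i hi; simp [ha i hi]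

/-- `C` is a circuit of the subspace `W`: `W ∩ ℝ^n_C` is one-dimensional and no
strict subset of `C` has this property. -/
def IsCircuit (W : Submodule ℝ (ι → ℝ)) (C : Set ι) : Prop :=
  Module.finrank ℝ ↥(W ⊓ coordSubspace C) = 1 ∧
  ∀ C' : Set ι, C' ⊂ C → Module.finrank ℝ ↥(W ⊓ coordSubspace C') ≠ 1

/-- The circuit imbalance measure `κ_W`. -/
noncomputable def kappa (W : Submodule ℝ (ι → ℝ)) : ℝ :=
  sSup ({1} ∪ {r | ∃ C : Set ι, IsCircuit W C ∧ ∃ g ∈ W, g ≠ 0 ∧ {i | g i ≠ 0} = C ∧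
    r = sSup ((fun i => |g i|) '' C) / sInf ((fun i => |g i|) '' C)})

/-- The matroidal closure of `K` with respect to `W`. -/
def clos (W : Submodule ℝ (ι → ℝ)) (K : Set ι) : Set ι :=
  K ∪ {j | j ∉ K ∧ ∃ C : Set ι, IsCircuit W C ∧ j ∈ C ∧ C ⊆ K ∪ {j}}

/-- `z` is the minimum-norm lift `L_I^W(p)` of `p` to `W`:
`z ∈ W`, `z` agrees with `p` on `I`, and `z` has minimum ℓ₂-norm among such vectors. -/
def IsMinLift (W : Submodule ℝ (ι → ℝ)) (I : Finset ι) (p z : ι → ℝ) : Prop :=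
  z ∈ W ∧ (∀ i ∈ I, z i = p i) ∧
  ∀ z' ∈ W, (∀ i ∈ I, z' i = p i) → norm2 z ≤ norm2 z'

/-- The ℓ₂→ℓ₂ operator norm of the lifting map `L_I^W` on `π_I(W)`. -/
noncomputable def liftOpNorm (W : Submodule ℝ (ι → ℝ)) (I : Finset ι) : ℝ :=
  sSup {r | ∃ p z, IsMinLift W I p z ∧ r = norm2 z / Real.sqrt (∑ i ∈ I, (p i) ^ 2)}

/-- The condition number `χ̄_W = max{‖L_I^W‖ : ∅ ≠ I}`. -/
noncomputable def chiBar (W : Submodule ℝ (ι → ℝ)) : ℝ :=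
  sSup {r | ∃ I : Finset ι, I.Nonempty ∧ r = liftOpNorm W I}

/-- The orthogonal complement of `W` in `ℝ^n`. -/
def orthComp (W : Submodule ℝ (ι → ℝ)) : Submodule ℝ (ι → ℝ) where
  carrier := {y | ∀ x ∈ W, ∑ i, x i * y i = 0}
  zero_mem' := by intro x hx; simp
  add_mem' := by
    intro a b ha hb x hx
    simpa [mul_add, Finset.sum_add_distrib, ha x hx] using hb x hx
  smul_mem' := by
    intro c a ha x hx
    have h := ha x hx
    have : ∑ i, x i * (c • a) i = c * ∑ i, x i * a i := by
      rw [Finset.mul_sum]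
      refine Finset.sum_congr rfl fun i _ => ?_
      simp [Pi.smul_apply, smul_eq_mul]; ring
    simpa [this, h]

/-- `x` is a feasible solution to the primal program of Primal-Dual(W,d,c). -/
def PrimalFeasible (W : Submodule ℝ (ι → ℝ)) (d x : ι → ℝ) : Prop :=
  x - d ∈ W ∧ ∀ i, 0 ≤ x i

/-- `s` is a feasible solution to the dual program of Primal-Dual(W,d,c). -/
def DualFeasible (W : Submodule ℝ (ι → ℝ)) (c s : ι → ℝ) : Prop :=
  s - c ∈ orthComp W ∧ ∀ i, 0 ≤ s i

/-- `(x,s)` is an optimal solution to Primal-Dual(W,d,c): both feasible and `⟨x,s⟩ = 0`. -/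
def IsOptimalPair (W : Submodule ℝ (ι → ℝ)) (d c x s : ι → ℝ) : Prop :=
  PrimalFeasible W d x ∧ DualFeasible W c s ∧ ∑ i, x i * s i = 0

/-- The ℓ₂→ℓ₂ operator norm of a matrix. -/
noncomputable def l2OpNorm {m n : Type*} [Fintype m] [Fintype n] [DecidableEq n]
    (A : Matrix m n ℝ) : ℝ :=
  ‖LinearMap.toContinuousLinearMap (Matrix.toEuclideanLin A)‖

/-- The max-norm (largest absolute value of an entry) of a matrix. -/
noncomputable def matMaxNorm {m n : Type*} [Fintype m] [Fintype n] (A : Matrix m n ℝ) : ℝ :=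
  ⨆ i, ⨆ j, |A i j|

section AuxCircuit

variable {n : ℕ}

/-- `h` is conformal to `y`: sign-consistent and supported within `supp y`. -/
private def Conf (y h : Fin n → ℝ) : Prop :=
  (∀ i, 0 ≤ y i * h i) ∧ ∀ i, y i = 0 → h i = 0

/-- `h` is an elementary vector (minimal-support nonzero vector) of `U`. -/
private def Elem (U : Submodule ℝ (Fin n → ℝ)) (h : Fin n → ℝ) : Prop :=
  h ∈ U ∧ h ≠ 0 ∧ ∀ g ∈ U, g ≠ 0 → (∀ i, h i = 0 → g i = 0) → ∀ i, g i = 0 → h i = 0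

open Classical in
private noncomputable def suppF (x : Fin n → ℝ) : Finset (Fin n) :=
  Finset.univ.filter fun i => x i ≠ 0

private lemma mem_suppF {x : Fin n → ℝ} {i : Fin n} : i ∈ suppF x ↔ x i ≠ 0 := by
  classical simp [suppF]

private lemma exists_elem_conf (U : Submodule ℝ (Fin n → ℝ)) (y : Fin n → ℝ)
    (hy : y ∈ U) (hy0 : y ≠ 0) :
    ∃ h, Elem U h ∧ Conf y h := by
  classical
  set S : Set (Fin n → ℝ) := {h | (h ∈ U ∧ h ≠ 0) ∧ Conf y h} with hSdef
  have hyS : y ∈ S := ⟨⟨hy, hy0⟩, fun i => mul_self_nonneg _, fun i hi => hi⟩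
  have hne : ((fun h => (suppF h).card) '' S).Nonempty := ⟨_, y, hyS, rfl⟩
  obtain ⟨h, hS, hcard⟩ := Nat.sInf_mem hne
  have hminc : ∀ h' ∈ S, (suppF h).card ≤ (suppF h').card := by
    intro h' hh'
    exact hcard.trans_le (Nat.sInf_le ⟨h', hh', rfl⟩)
  refine ⟨h, ⟨hS.1.1, hS.1.2, ?_⟩, hS.2⟩
  intro g hgU hg0 hsub i hgi
  by_contra hhi
  have key : ∀ g', g' ∈ U → (∀ j, h j = 0 → g' j = 0) → g' i = 0 →
      ∀ j0, 0 < g' j0 * h j0 → False := by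
    intro g' hg'U hsub' hg'i j0 hj0
    set T : Finset (Fin n) := Finset.univ.filter (fun j => 0 < g' j * h j) with hT
    have hTne : T.Nonempty := ⟨j0, by simp [hT, hj0]⟩
    obtain ⟨m, hmT, hmmin⟩ := T.exists_min_image (fun j => h j / g' j) hTne
    have hm : 0 < g' m * h m := by simpa [hT] using hmT
    have hgm : g' m ≠ 0 := fun e => by simp [e] at hm
    have hhm : h m ≠ 0 := fun e => by simp [e] at hm
    set t := h m / g' m with htdef
    have ht0 : 0 < t := by
      rcases mul_pos_iff.mp hm with ⟨h1, h2⟩ | ⟨h1, h2⟩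
      · exact div_pos h2 h1
      · exact div_pos_of_neg_of_neg h2 h1
    set h' : Fin n → ℝ := h - t • g' with hh'def
    have hh'app : ∀ j, h' j = h j - t * g' j := fun j => rfl
    have hh'U : h' ∈ U := U.sub_mem hS.1.1 (U.smul_mem t hg'U)
    have hsup : ∀ j, h j = 0 → h' j = 0 := by
      intro j hj
      rw [hh'app, hsub' j hj, hj]; ring
    have hkey : ∀ j, h j ≠ 0 → 0 ≤ h j * h' j := by
      intro j hj
      rw [hh'app]
      by_cases hc : 0 < g' j * h j
      · have hjT : j ∈ T := by simp [hT, hc]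
        have hle : t ≤ h j / g' j := hmmin j hjT
        have hgj : g' j ≠ 0 := fun e => by simp [e] at hc
        have h2 : t * (g' j * h j) ≤ (h j / g' j) * (g' j * h j) :=
          mul_le_mul_of_nonneg_right hle hc.le
        have h3 : (h j / g' j) * (g' j * h j) = h j * h j := by
          field_simp
        nlinarith
      · have hc' : g' j * h j ≤ 0 := not_lt.mp hc
        nlinarith [mul_nonneg ht0.le (neg_nonneg.mpr hc'), mul_self_nonneg (h j)]
    have hconf' : Conf y h' := by
      constructor
      · intro j
        by_cases hj : h j = 0
        · rw [hsup j hj]; simp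
        · have e : y j * h' j = (y j * h j) * (h j * h' j) / (h j * h j) := by
            field_simp
          rw [e]
          exact div_nonneg (mul_nonneg (hS.2.1 j) (hkey j hj)) (mul_self_nonneg _)
      · intro j hyj
        exact hsup j (hS.2.2 j hyj)
    have hh'0 : h' ≠ 0 := by
      intro e
      have h0 : h' i = 0 := by rw [e]; rfl
      rw [hh'app, hg'i, mul_zero, sub_zero] at h0
      exact hhi h0
    have hss : suppF h' ⊂ suppF h := by
      constructor
      · intro j hj
        rw [mem_suppF] at *
        exact fun hz => hj (hsup j hz)
      · intro hc
        have hmm : m ∈ suppF h := mem_suppF.mpr hhm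
        have hmm' : h' m ≠ 0 := mem_suppF.mp (hc hmm)
        apply hmm'
        rw [hh'app, htdef, div_mul_cancel₀ _ hgm, sub_self]
    have hge := hminc h' ⟨⟨hh'U, hh'0⟩, hconf'⟩
    exact absurd hge (not_le.mpr (Finset.card_lt_card hss))
  obtain ⟨j, hj⟩ : ∃ j, g j ≠ 0 := Function.ne_iff.mp hg0
  have hhj : h j ≠ 0 := fun e => hj (hsub j e)
  rcases (mul_ne_zero hj hhj).lt_or_gt with hlt | hgt
  · refine key (-g) (U.neg_mem hgU) (fun k hk => by simp [hsub k hk]) (by simp [hgi]) j ?_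
    rw [Pi.neg_apply, neg_mul]
    linarith
  · exact key g hgU hsub hgi j hgt

end AuxCircuit
section AuxCircuit2

variable {n : ℕ}

private lemma conf_trans {y y' h : Fin n → ℝ} (h1 : Conf y y') (h2 : Conf y' h) : Conf y h := by
  constructor
  · intro j
    by_cases hy : y j = 0
    · rw [h2.2 j (h1.2 j hy)]; simp
    · by_cases hy' : y' j = 0
      · rw [h2.2 j hy']; simp
      · have e : y j * h j = (y j * y' j) * (y' j * h j) / (y' j * y' j) := by
          field_simp
        rw [e]
        exact div_nonneg (mul_nonneg (h1.1 j) (h2.1 j)) (mul_self_nonneg _)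
  · intro j hy
    exact h2.2 j (h1.2 j hy)

private lemma exists_elem_conf_at_aux (U : Submodule ℝ (Fin n → ℝ)) :
    ∀ N (y : Fin n → ℝ), (suppF y).card ≤ N → y ∈ U → ∀ i, y i ≠ 0 →
    ∃ h, Elem U h ∧ Conf y h ∧ h i ≠ 0 := by
  classical
  intro N
  induction N with
  | zero =>
    intro y hcard hy i hyi
    have hmem : i ∈ suppF y := mem_suppF.mpr hyi
    rw [Finset.card_eq_zero.mp (Nat.le_zero.mp hcard)] at hmem
    simp at hmem
  | succ N ih =>
    intro y hcard hy i hyi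
    have hy0 : y ≠ 0 := fun e => hyi (by rw [e]; rfl)
    obtain ⟨h, hel, hconf⟩ := exists_elem_conf U y hy hy0
    by_cases hhi : h i ≠ 0
    · exact ⟨h, hel, hconf, hhi⟩
    push_neg at hhi
    have hsne : (suppF h).Nonempty := by
      obtain ⟨j, hj⟩ := Function.ne_iff.mp hel.2.1
      exact ⟨j, mem_suppF.mpr hj⟩
    obtain ⟨m, hmS, hmmin⟩ := (suppF h).exists_min_image (fun j => y j / h j) hsne
    have hratio : ∀ j ∈ suppF h, 0 < y j / h j := by
      intro j hj
      have hjh : h j ≠ 0 := mem_suppF.mp hj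
      have hyj : y j ≠ 0 := fun e => hjh (hconf.2 j e)
      have hpos : 0 < y j * h j := lt_of_le_of_ne (hconf.1 j) (Ne.symm (mul_ne_zero hyj hjh))
      rcases mul_pos_iff.mp hpos with ⟨h1, h2⟩ | ⟨h1, h2⟩
      · exact div_pos h1 h2
      · exact div_pos_of_neg_of_neg h1 h2
    set α := y m / h m with hα
    have hα0 : 0 < α := hratio m hmS
    set y' : Fin n → ℝ := y - α • h with hy'def
    have hy'app : ∀ j, y' j = y j - α * h j := fun j => rfl
    have hy'U : y' ∈ U := U.sub_mem hy (U.smul_mem _ hel.1)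
    have hy'zero : ∀ j, y j = 0 → y' j = 0 := by
      intro j hj
      rw [hy'app, hj, hconf.2 j hj]; ring
    have hconf2 : Conf y y' := by
      refine ⟨?_, hy'zero⟩
      intro j
      by_cases hjh : h j = 0
      · rw [hy'app, hjh, mul_zero, sub_zero]
        exact mul_self_nonneg _
      · have hjS : j ∈ suppF h := mem_suppF.mpr hjh
        have hle : α ≤ y j / h j := hmmin j hjS
        have hyj : y j ≠ 0 := fun e => hjh (hconf.2 j e)
        have hpos : 0 < y j * h j := lt_of_le_of_ne (hconf.1 j) (Ne.symm (mul_ne_zero hyj hjh))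
        have h2 : α * (y j * h j) ≤ (y j / h j) * (y j * h j) :=
          mul_le_mul_of_nonneg_right hle hpos.le
        have h3 : (y j / h j) * (y j * h j) = y j * y j := by
          field_simp
        rw [hy'app]
        nlinarith
    have hy'i : y' i ≠ 0 := by
      rw [hy'app, hhi, mul_zero, sub_zero]
      exact hyi
    have hy'card : (suppF y').card ≤ N := by
      have hsub : suppF y' ⊆ suppF y := by
        intro j hj
        rw [mem_suppF] at *
        exact fun e => hj (hy'zero j e)
      have hmy : m ∈ suppF y :=
        mem_suppF.mpr (fun e => (mem_suppF.mp hmS) (hconf.2 m e))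
      have hmy' : m ∉ suppF y' := by
        rw [mem_suppF]
        simp only [ne_eq, not_not]
        rw [hy'app, hα, div_mul_cancel₀ _ (mem_suppF.mp hmS), sub_self]
      have hss : suppF y' ⊂ suppF y := ⟨hsub, fun hc => hmy' (hc hmy)⟩
      have hlt := Finset.card_lt_card hss
      omega
    obtain ⟨h', hel', hconf', hh'i⟩ := ih y' hy'card hy'U i hy'i
    exact ⟨h', hel', conf_trans hconf2 hconf', hh'i⟩

private lemma exists_elem_conf_at (U : Submodule ℝ (Fin n → ℝ)) (y : Fin n → ℝ)
    (hy : y ∈ U) (i : Fin n) (hyi : y i ≠ 0) :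
    ∃ h, Elem U h ∧ Conf y h ∧ h i ≠ 0 :=
  exists_elem_conf_at_aux U (suppF y).card y le_rfl hy i hyi

private lemma mem_coordSubspace {C : Set (Fin n)} {x : Fin n → ℝ} :
    x ∈ coordSubspace C ↔ ∀ i ∉ C, x i = 0 := Iff.rfl

private lemma elem_isCircuit {U : Submodule ℝ (Fin n → ℝ)} {h : Fin n → ℝ}
    (he : Elem U h) : IsCircuit U {i | h i ≠ 0} := by
  obtain ⟨hU, h0, hmin⟩ := he
  constructor
  · have heq : U ⊓ coordSubspace {i | h i ≠ 0} = Submodule.span ℝ {h} := by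
      apply le_antisymm
      · intro g hg
        rw [Submodule.mem_inf] at hg
        rw [Submodule.mem_span_singleton]
        rcases eq_or_ne g 0 with rfl | hg0
        · exact ⟨0, by simp⟩
        obtain ⟨j, hj0⟩ := Function.ne_iff.mp h0
        have hj : h j ≠ 0 := hj0
        have hsub : ∀ i, h i = 0 → g i = 0 := by
          intro i hi
          exact hg.2 i (by simp [hi])
        set w : Fin n → ℝ := g - (g j / h j) • h with hw
        have hwU : w ∈ U := U.sub_mem hg.1 (U.smul_mem _ hU)
        have hwj : w j = 0 := by
          simp only [hw, Pi.sub_apply, Pi.smul_apply, smul_eq_mul]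
          rw [div_mul_cancel₀ _ hj, sub_self]
        rcases eq_or_ne w 0 with hw0 | hw0
        · exact ⟨g j / h j, (sub_eq_zero.mp hw0).symm⟩
        · exfalso
          have hcon := hmin w hwU hw0 (fun i hi => by
            simp only [hw, Pi.sub_apply, Pi.smul_apply, smul_eq_mul, hsub i hi, hi,
              mul_zero, sub_zero]) j hwj
          exact hj hcon
      · rw [Submodule.span_le, Set.singleton_subset_iff]
        exact ⟨hU, fun i hi => not_not.mp hi⟩
    rw [heq]
    exact finrank_span_singleton h0
  · intro C' hC'
    have hbot : U ⊓ coordSubspace C' = ⊥ := by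
      rw [Submodule.eq_bot_iff]
      intro x hx
      rw [Submodule.mem_inf] at hx
      by_contra hx0
      have hsub : ∀ i, h i = 0 → x i = 0 := by
        intro i hi
        exact hx.2 i (fun hc => (hC'.1 hc) hi)
      have hcon := hmin x hx.1 hx0 hsub
      obtain ⟨i, hiC, hiC'⟩ := Set.exists_of_ssubset hC'
      exact hiC (hcon i (hx.2 i hiC'))
    rw [hbot]
    simp

end AuxCircuit2
section AuxKappa

variable {n : ℕ}

open Pointwise

private def kappaSet (W : Submodule ℝ (Fin n → ℝ)) : Set ℝ :=
  {1} ∪ {r | ∃ C : Set (Fin n), IsCircuit W C ∧ ∃ g ∈ W, g ≠ 0 ∧ {i | g i ≠ 0} = C ∧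
    r = sSup ((fun i => |g i|) '' C) / sInf ((fun i => |g i|) '' C)}

private lemma kappa_eq (W : Submodule ℝ (Fin n → ℝ)) : kappa W = sSup (kappaSet W) := rfl

private lemma abs_image_smul (c : ℝ) (g : Fin n → ℝ) (C : Set (Fin n)) :
    (fun i => |(c • g) i|) '' C = |c| • ((fun i => |g i|) '' C) := by
  rw [← Set.image_smul, Set.image_image]
  exact Set.image_congr fun i _ => by simp [abs_mul]

private lemma ratio_invariant {W : Submodule ℝ (Fin n → ℝ)} {C : Set (Fin n)}
    (hC : Module.finrank ℝ ↥(W ⊓ coordSubspace C) = 1)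
    {g g' : Fin n → ℝ} (hg : g ∈ W) (hg0 : g ≠ 0) (hgC : {i | g i ≠ 0} = C)
    (hg' : g' ∈ W) (hg'0 : g' ≠ 0) (hg'C : {i | g' i ≠ 0} = C) :
    sSup ((fun i => |g' i|) '' C) / sInf ((fun i => |g' i|) '' C) =
    sSup ((fun i => |g i|) '' C) / sInf ((fun i => |g i|) '' C) := by
  have hmem : g ∈ W ⊓ coordSubspace C := by
    refine Submodule.mem_inf.mpr ⟨hg, fun i hi => ?_⟩
    by_contra hne
    exact hi (hgC ▸ Set.mem_setOf_eq ▸ hne)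
  have hmem' : g' ∈ W ⊓ coordSubspace C := by
    refine Submodule.mem_inf.mpr ⟨hg', fun i hi => ?_⟩
    by_contra hne
    exact hi (hg'C ▸ Set.mem_setOf_eq ▸ hne)
  obtain ⟨v, hv0, hvspan⟩ := finrank_eq_one_iff'.mp hC
  obtain ⟨a, ha⟩ := hvspan ⟨g, hmem⟩
  obtain ⟨b, hb⟩ := hvspan ⟨g', hmem'⟩
  have hag : a • (v : Fin n → ℝ) = g := congrArg Subtype.val ha
  have hbg : b • (v : Fin n → ℝ) = g' := congrArg Subtype.val hb
  have ha0 : a ≠ 0 := by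
    rintro rfl
    rw [zero_smul] at hag
    exact hg0 hag.symm
  have hb0 : b ≠ 0 := by
    rintro rfl
    rw [zero_smul] at hbg
    exact hg'0 hbg.symm
  set c : ℝ := b / a with hc
  have hc0 : c ≠ 0 := div_ne_zero hb0 ha0
  have hgg : g' = c • g := by
    rw [← hag, ← hbg]
    funext i
    simp only [Pi.smul_apply, smul_eq_mul, hc]
    field_simp
  rw [hgg, abs_image_smul, Real.sSup_smul_of_nonneg (abs_nonneg c),
    Real.sInf_smul_of_nonneg (abs_nonneg c), smul_eq_mul, smul_eq_mul,
    mul_div_mul_left _ _ (abs_ne_zero.mpr hc0)]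

private lemma kappaSet_bddAbove (W : Submodule ℝ (Fin n → ℝ)) : BddAbove (kappaSet W) := by
  classical
  set F : Set (Fin n) → ℝ := fun C => sSup {r : ℝ | ∃ g ∈ W, g ≠ 0 ∧ {i | g i ≠ 0} = C ∧
    r = sSup ((fun i => |g i|) '' C) / sInf ((fun i => |g i|) '' C)} with hF
  have hsub : kappaSet W ⊆ {1} ∪ F '' Set.univ := by
    rintro r (hr | ⟨C, hC, g, hgW, hg0, hgC, hr⟩)
    · exact Or.inl hr
    right
    refine ⟨C, Set.mem_univ _, ?_⟩
    have hset : {r' : ℝ | ∃ g' ∈ W, g' ≠ 0 ∧ {i | g' i ≠ 0} = C ∧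
        r' = sSup ((fun i => |g' i|) '' C) / sInf ((fun i => |g' i|) '' C)} = {r} := by
      ext r'
      simp only [Set.mem_setOf_eq, Set.mem_singleton_iff]
      constructor
      · rintro ⟨g', hg'W, hg'0, hg'C, rfl⟩
        rw [hr]
        exact ratio_invariant hC.1 hgW hg0 hgC hg'W hg'0 hg'C
      · rintro rfl
        exact ⟨g, hgW, hg0, hgC, hr⟩
    rw [hF]
    simp only
    rw [hset, csSup_singleton]
  exact (Set.Finite.subset ((Set.finite_singleton 1).union (Set.finite_univ.image F)) hsub).bddAbove

private lemma kappa_ge_one (W : Submodule ℝ (Fin n → ℝ)) : (1 : ℝ) ≤ kappa W := by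
  rw [kappa_eq]
  exact le_csSup (kappaSet_bddAbove W) (Set.mem_union_left _ rfl)

private lemma abs_le_kappa {W : Submodule ℝ (Fin n → ℝ)} {g : Fin n → ℝ}
    (hel : Elem W g) (a b : Fin n) (ha : g a ≠ 0) (hb : g b ≠ 0) :
    |g a| ≤ kappa W * |g b| := by
  classical
  set C : Set (Fin n) := {i | g i ≠ 0} with hC
  set S : Set ℝ := (fun i => |g i|) '' C with hS
  have hSfin : S.Finite := (Set.toFinite C).image _
  have hSne : S.Nonempty := ⟨|g a|, a, ha, rfl⟩
  have hSpos : ∀ r ∈ S, 0 < r := by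
    rintro r ⟨i, hi, rfl⟩
    exact abs_pos.mpr hi
  have hinf_pos : 0 < sInf S := hSpos _ (hSne.csInf_mem hSfin)
  have h1 : |g a| ≤ sSup S := le_csSup hSfin.bddAbove ⟨a, ha, rfl⟩
  have h2 : sInf S ≤ |g b| := csInf_le hSfin.bddBelow ⟨b, hb, rfl⟩
  have hr : sSup S / sInf S ∈ kappaSet W :=
    Or.inr ⟨C, hC ▸ elem_isCircuit hel, g, hel.1, hel.2.1, hC.symm, rfl⟩
  have hκ : sSup S / sInf S ≤ kappa W := by
    rw [kappa_eq]
    exact le_csSup (kappaSet_bddAbove W) hr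
  have hκ0 : (0 : ℝ) ≤ kappa W := le_trans zero_le_one (kappa_ge_one W)
  calc |g a| ≤ sSup S := h1
    _ = sSup S / sInf S * sInf S := (div_mul_cancel₀ _ hinf_pos.ne').symm
    _ ≤ kappa W * sInf S := mul_le_mul_of_nonneg_right hκ hinf_pos.le
    _ ≤ kappa W * |g b| := mul_le_mul_of_nonneg_left h2 hκ0

end AuxKappa
section AuxOrth

variable {n : ℕ}

private noncomputable def eL (n : ℕ) : (Fin n → ℝ) ≃ₗ[ℝ] EuclideanSpace ℝ (Fin n) :=
  (WithLp.linearEquiv 2 ℝ (Fin n → ℝ)).symm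

private lemma eL_apply (x : Fin n → ℝ) (i : Fin n) : eL n x i = x i := rfl

private lemma eL_symm_apply (x : EuclideanSpace ℝ (Fin n)) (i : Fin n) :
    (eL n).symm x i = x i := rfl

private lemma inner_eL (x y : Fin n → ℝ) :
    (inner ℝ (eL n x) (eL n y) : ℝ) = ∑ i, x i * y i := by
  rw [PiLp.inner_apply]
  exact Finset.sum_congr rfl fun i _ => by
    rw [RCLike.inner_apply', eL_apply, eL_apply, conj_trivial]

private lemma mem_orthComp {W : Submodule ℝ (Fin n → ℝ)} {y : Fin n → ℝ} :
    y ∈ orthComp W ↔ ∀ x ∈ W, ∑ i, x i * y i = 0 := Iff.rfl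

private lemma mem_orthComp_iff (W : Submodule ℝ (Fin n → ℝ)) (y : Fin n → ℝ) :
    y ∈ orthComp W ↔ eL n y ∈ (W.map (eL n).toLinearMap)ᗮ := by
  rw [Submodule.mem_orthogonal]
  constructor
  · rintro hy u ⟨x, hx, rfl⟩
    rw [LinearEquiv.coe_coe, inner_eL]
    exact hy x hx
  · intro hy x hx
    have h := hy (eL n x) ⟨x, hx, rfl⟩
    rwa [inner_eL] at h

private lemma coordE_orth (A : Set (Fin n)) :
    ((coordSubspace A).map (eL n).toLinearMap)ᗮ = (coordSubspace Aᶜ).map (eL n).toLinearMap := by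
  ext u
  rw [Submodule.mem_orthogonal]
  constructor
  · intro hu
    refine ⟨(eL n).symm u, ?_, by simp⟩
    intro i hi
    have hiA : i ∈ A := by simpa using hi
    have hs : (Pi.single i 1 : Fin n → ℝ) ∈ coordSubspace A := by
      intro k hk
      have hki : k ≠ i := fun e => hk (e ▸ hiA)
      simp [Pi.single_apply, hki]
    have h := hu (eL n (Pi.single i 1)) ⟨_, hs, rfl⟩
    have he : (inner ℝ (eL n (Pi.single i 1)) u : ℝ) = u i := by
      rw [PiLp.inner_apply]
      rw [Finset.sum_eq_single i]
      · rw [RCLike.inner_apply', eL_apply, conj_trivial, Pi.single_eq_same, one_mul]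
      · intro k _ hk
        rw [RCLike.inner_apply', eL_apply, conj_trivial, Pi.single_eq_of_ne hk, zero_mul]
      · intro hk
        exact absurd (Finset.mem_univ i) hk
    rw [he] at h
    exact h
  · rintro ⟨z, hz, rfl⟩ v ⟨x, hx, rfl⟩
    have hzero : (inner ℝ (eL n x) (eL n z) : ℝ) = 0 := by
      rw [inner_eL]
      apply Finset.sum_eq_zero
      intro k _
      by_cases hk : k ∈ A
      · rw [hz k (by simpa using hk), mul_zero]
      · rw [hx k hk, zero_mul]
    exact hzero

private lemma exists_orth_support (W : Submodule ℝ (Fin n → ℝ)) (A : Set (Fin n))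
    (i0 : Fin n) (hi0 : i0 ∈ A)
    (hall : ∀ x ∈ W, (∀ k ∉ A, x k = 0) → x i0 = 0) :
    ∃ w ∈ orthComp W, w i0 = 1 ∧ ∀ k ∈ A, k ≠ i0 → w k = 0 := by
  classical
  set V := W.map (eL n).toLinearMap with hV
  set CA := (coordSubspace A).map (eL n).toLinearMap with hCA
  have hsingle : EuclideanSpace.single i0 (1 : ℝ) ∈ (V ⊓ CA)ᗮ := by
    rw [Submodule.mem_orthogonal]
    intro u hu
    rw [Submodule.mem_inf] at hu
    obtain ⟨x, hx, rfl⟩ := hu.1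
    obtain ⟨x', hx', hx'e⟩ := hu.2
    have hxx : x' = x := (eL n).injective hx'e
    have hx0 : x i0 = 0 := hall x hx (fun k hk => by rw [← hxx]; exact hx' k hk)
    have he : (inner ℝ (eL n x) (EuclideanSpace.single i0 (1 : ℝ)) : ℝ) = x i0 := by
      rw [PiLp.inner_apply]
      rw [Finset.sum_eq_single i0]
      · rw [RCLike.inner_apply', eL_apply, conj_trivial, EuclideanSpace.single_apply,
          if_pos rfl, mul_one]
      · intro k _ hk
        rw [RCLike.inner_apply', eL_apply, conj_trivial, EuclideanSpace.single_apply,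
          if_neg hk, mul_zero]
      · intro hk
        exact absurd (Finset.mem_univ i0) hk
    exact he.trans hx0
  have h2 : (Vᗮ ⊔ CAᗮ)ᗮ = V ⊓ CA := by
    rw [← Submodule.inf_orthogonal, Submodule.orthogonal_orthogonal,
      Submodule.orthogonal_orthogonal]
  have horth : (V ⊓ CA)ᗮ = Vᗮ ⊔ CAᗮ := by
    rw [← h2, Submodule.orthogonal_orthogonal]
  rw [horth] at hsingle
  obtain ⟨v, hv, z, hz, hvz⟩ := Submodule.mem_sup.mp hsingle
  rw [hCA, coordE_orth] at hz
  obtain ⟨z0, hz0, rfl⟩ := hz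
  have hpt : ∀ k, v k + z0 k = EuclideanSpace.single i0 (1 : ℝ) k := fun k => congrArg (fun w : EuclideanSpace ℝ (Fin n) => w k) hvz
  refine ⟨(eL n).symm v, ?_, ?_, ?_⟩
  · rw [mem_orthComp_iff W, (eL n).apply_symm_apply]
    exact hv
  · have hz0i : z0 i0 = 0 := hz0 i0 (by simpa using hi0)
    have := hpt i0
    rw [hz0i, add_zero, EuclideanSpace.single_apply, if_pos rfl] at this
    rw [eL_symm_apply]
    exact this
  · intro k hkA hki
    have hz0k : z0 k = 0 := hz0 k (by simpa using hkA)
    have := hpt k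
    rw [hz0k, add_zero, EuclideanSpace.single_apply, if_neg hki] at this
    rw [eL_symm_apply]
    exact this

private lemma exchange (W : Submodule ℝ (Fin n → ℝ)) (h : Fin n → ℝ)
    (hel : Elem (orthComp W) h) (i0 j : Fin n) (hi0 : h i0 ≠ 0) (hj : h j ≠ 0) (hji : j ≠ i0) :
    ∃ g, Elem W g ∧ g i0 ≠ 0 ∧ ∀ k, k ≠ i0 → k ≠ j → h k ≠ 0 → g k = 0 := by
  classical
  set A : Set (Fin n) := {k | h k = 0} ∪ {i0, j} with hA
  by_cases hex : ∃ x, x ∈ W ∧ (∀ k ∉ A, x k = 0) ∧ x i0 ≠ 0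
  · obtain ⟨x, hxW, hxA, hxi0⟩ := hex
    obtain ⟨g, hgel, hgconf, hgi0⟩ := exists_elem_conf_at W x hxW i0 hxi0
    refine ⟨g, hgel, hgi0, ?_⟩
    intro k hk1 hk2 hk3
    apply hgconf.2
    apply hxA
    simp only [hA, Set.mem_union, Set.mem_setOf_eq, Set.mem_insert_iff, Set.mem_singleton_iff]
    push_neg
    exact ⟨hk3, hk1, hk2⟩
  · push_neg at hex
    have hall : ∀ x ∈ W, (∀ k ∉ A, x k = 0) → x i0 = 0 := by
      intro x hxW hxA
      by_contra hne
      exact hne (hex x hxW hxA)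
    obtain ⟨w, hwW, hwi0, hwz⟩ := exists_orth_support W A i0 (by simp [hA]) hall
    exfalso
    have hw0 : w ≠ 0 := fun e => by simp [e] at hwi0
    have hsupp : ∀ k, h k = 0 → w k = 0 := by
      intro k hk
      by_cases hki : k = i0
      · rw [hki] at hk
        exact absurd hk hi0
      · exact hwz k (by simp [hA, hk]) hki
    have hcon := hel.2.2 w hwW hw0 hsupp j
    have hwj : w j = 0 := hwz j (by simp [hA]) hji
    exact hj (hcon hwj)

end AuxOrth
/-- coordinates of `x̃` exceeding `(κ_W + 1)‖d − d̃‖₁` vanish in every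
dual optimal solution of Primal-Dual(W,d,c). -/
theorem dual_optimal_vanishing {n : ℕ} (W : Submodule ℝ (Fin n → ℝ))
    (c d dt xt s : Fin n → ℝ)
    (hopt : IsOptimalPair W dt c xt s)
    (hfeas : ∃ x : Fin n → ℝ, x - d ∈ W ∧ ∀ i, 0 ≤ x i)
    (sstar : Fin n → ℝ)
    (hsfeas : DualFeasible W c sstar)
    (hsopt : ∀ s' : Fin n → ℝ, DualFeasible W c s' →
      ∑ i, d i * (c i - s' i) ≤ ∑ i, d i * (c i - sstar i)) :
    ∀ i, (kappa W + 1) * norm1 (d - dt) < xt i → sstar i = 0 := by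
  classical
  intro i0 hi0
  by_contra hs0
  obtain ⟨⟨hxtW, hxt0⟩, ⟨hsW, hsnn⟩, hcomp⟩ := hopt
  obtain ⟨hstarW, hstar0⟩ := hsfeas
  have hsstar_pos : 0 < sstar i0 := (hstar0 i0).lt_of_ne (Ne.symm hs0)
  have hk1 : (1 : ℝ) ≤ kappa W := kappa_ge_one W
  have hnorm1_nonneg : 0 ≤ norm1 (d - dt) := Finset.sum_nonneg fun i _ => abs_nonneg _
  have hxt_pos : 0 < xt i0 :=
    lt_of_le_of_lt (mul_nonneg (by linarith) hnorm1_nonneg) hi0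
  have hcompj : ∀ j, xt j * s j = 0 := fun j =>
    (Finset.sum_eq_zero_iff_of_nonneg
      (fun j _ => mul_nonneg (hxt0 j) (hsnn j))).mp hcomp j (Finset.mem_univ j)
  have hsi0 : s i0 = 0 := by
    rcases mul_eq_zero.mp (hcompj i0) with h | h
    · exact absurd h hxt_pos.ne'
    · exact h
  set y : Fin n → ℝ := sstar - s with hy
  have hyapp : ∀ j, y j = sstar j - s j := fun j => rfl
  have hyW : y ∈ orthComp W := by
    have he : y = (sstar - c) - (s - c) := by
      funext k
      show sstar k - s k = (sstar k - c k) - (s k - c k)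
      ring
    rw [he]
    exact (orthComp W).sub_mem hstarW hsW
  have hyi0pos : 0 < y i0 := by
    rw [hyapp, hsi0, sub_zero]
    exact hsstar_pos
  obtain ⟨h, hel, hconf, hhi0⟩ := exists_elem_conf_at (orthComp W) y hyW i0 hyi0pos.ne'
  have hhi0pos : 0 < h i0 := by
    rcases hhi0.lt_or_gt with hlt | hgt
    · exfalso
      nlinarith [hconf.1 i0]
    · exact hgt
  have hpos : ∀ j, 0 < h j → 0 < sstar j := by
    intro j hj
    have h1 : 0 ≤ y j * h j := hconf.1 j
    have h2 : y j ≠ 0 := fun e => hj.ne' (hconf.2 j e)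
    have h3 : 0 < y j := by
      rcases h2.lt_or_gt with hlt | hgt
      · nlinarith
      · exact hgt
    have h4 := hsnn j
    rw [hyapp] at h3
    linarith
  set P : Finset (Fin n) := Finset.univ.filter (fun j => 0 < h j) with hP
  have hPne : P.Nonempty := ⟨i0, by simp [hP, hhi0pos]⟩
  obtain ⟨m, hmP, hmmin⟩ := P.exists_min_image (fun j => sstar j / h j) hPne
  have hmh : 0 < h m := by simpa [hP] using hmP
  set α := sstar m / h m with hα
  have hα0 : 0 < α := div_pos (hpos m hmh) hmh
  set s' : Fin n → ℝ := sstar - α • h with hs'def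
  have hs'app : ∀ j, s' j = sstar j - α * h j := fun j => rfl
  have hs'feas : DualFeasible W c s' := by
    constructor
    · have he : s' - c = (sstar - c) - α • h := by funext k; simp [hs'app]; ring
      rw [he]
      exact (orthComp W).sub_mem hstarW ((orthComp W).smul_mem _ hel.1)
    · intro j
      rw [hs'app]
      by_cases hj : 0 < h j
      · have hle : α ≤ sstar j / h j := hmmin j (by simp [hP, hj])
        have := (le_div_iff₀ hj).mp hle
        linarith
      · push_neg at hj
        nlinarith [hstar0 j]
  have hdh : ∑ i, d i * h i ≤ 0 := by
    have hexpand : ∑ i, d i * (c i - s' i) = ∑ i, d i * (c i - sstar i) + α * ∑ i, d i * h i := by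
      rw [Finset.mul_sum, ← Finset.sum_add_distrib]
      apply Finset.sum_congr rfl
      intro i _
      rw [hs'app]
      ring
    have hle := hsopt s' hs'feas
    rw [hexpand] at hle
    nlinarith
  have hid1 : ∑ i, xt i * h i = ∑ i, dt i * h i := by
    have h0 := mem_orthComp.mp hel.1 (xt - dt) hxtW
    have he : ∑ i, (xt - dt) i * h i = ∑ i, xt i * h i - ∑ i, dt i * h i := by
      rw [← Finset.sum_sub_distrib]
      exact Finset.sum_congr rfl fun i _ => by simp [sub_mul]
    rw [he] at h0
    linarith
  have hlow : xt i0 * h i0 ≤ ∑ i, xt i * h i := by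
    apply Finset.single_le_sum (f := fun i => xt i * h i) ?_ (Finset.mem_univ i0)
    intro j _
    show 0 ≤ xt j * h j
    by_cases hj : 0 ≤ h j
    · exact mul_nonneg (hxt0 j) hj
    · push_neg at hj
      have h1 : 0 ≤ y j * h j := hconf.1 j
      have h2 : y j ≠ 0 := fun e => hj.ne (hconf.2 j e)
      have h3 : y j < 0 := by
        rcases h2.lt_or_gt with hlt | hgt
        · exact hlt
        · nlinarith
      have h4 : 0 < s j := by
        rw [hyapp] at h3
        have := hstar0 j
        linarith
      have h5 : xt j = 0 := by
        rcases mul_eq_zero.mp (hcompj j) with h | h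
        · exact h
        · exact absurd h h4.ne'
      rw [h5, zero_mul]
  have hbound : ∀ j, |h j| ≤ (kappa W + 1) * h i0 := by
    intro j
    by_cases hj0 : h j = 0
    · rw [hj0, abs_zero]
      exact mul_nonneg (by linarith) hhi0pos.le
    by_cases hji : j = i0
    · rw [hji, abs_of_pos hhi0pos]
      nlinarith
    · obtain ⟨g, hgel, hgi0, hgz⟩ := exchange W h hel i0 j hhi0pos.ne' hj0 hji
      have hsum : ∑ k, g k * h k = 0 := mem_orthComp.mp hel.1 g hgel.1
      have hpair : g i0 * h i0 + g j * h j = 0 := by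
        have hsub : ∑ k ∈ ({i0, j} : Finset (Fin n)), g k * h k = ∑ k, g k * h k := by
          apply Finset.sum_subset (Finset.subset_univ _)
          intro k _ hk
          simp only [Finset.mem_insert, Finset.mem_singleton] at hk
          push_neg at hk
          by_cases hhk : h k = 0
          · rw [hhk, mul_zero]
          · rw [hgz k hk.1 hk.2 hhk, zero_mul]
        have hne : i0 ≠ j := fun e => hji e.symm
        have hp : ∑ k ∈ ({i0, j} : Finset (Fin n)), g k * h k = g i0 * h i0 + g j * h j :=
          Finset.sum_pair hne
        rw [← hp, hsub]
        exact hsum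
      have hgj : g j ≠ 0 := by
        intro e
        rw [e, zero_mul, add_zero] at hpair
        exact (mul_ne_zero hgi0 hhi0pos.ne') hpair
      have hgle := abs_le_kappa hgel i0 j hgi0 hgj
      have habs : |g j| * |h j| = |g i0| * |h i0| := by
        have he : g j * h j = -(g i0 * h i0) := by linarith
        calc |g j| * |h j| = |g j * h j| := (abs_mul _ _).symm
          _ = |g i0 * h i0| := by rw [he, abs_neg]
          _ = |g i0| * |h i0| := abs_mul _ _
      have hgjpos : 0 < |g j| := abs_pos.mpr hgj
      have hstep : |g j| * |h j| ≤ |g j| * (kappa W * |h i0|) := by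
        rw [habs]
        calc |g i0| * |h i0| ≤ kappa W * |g j| * |h i0| :=
              mul_le_mul_of_nonneg_right hgle (abs_nonneg _)
          _ = |g j| * (kappa W * |h i0|) := by ring
      have h2 : |h j| ≤ kappa W * |h i0| := le_of_mul_le_mul_left hstep hgjpos
      rw [abs_of_pos hhi0pos] at h2
      nlinarith
  have hnorm1 : norm1 (d - dt) = ∑ i, |d i - dt i| := by
    apply Finset.sum_congr rfl
    intro i _
    rw [Pi.sub_apply]
  have hchain : xt i0 * h i0 ≤ norm1 (d - dt) * ((kappa W + 1) * h i0) := by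
    calc xt i0 * h i0 ≤ ∑ i, xt i * h i := hlow
      _ = ∑ i, dt i * h i := hid1
      _ = ∑ i, (dt i - d i) * h i + ∑ i, d i * h i := by
          rw [← Finset.sum_add_distrib]
          exact Finset.sum_congr rfl fun i _ => by ring
      _ ≤ ∑ i, (dt i - d i) * h i := by linarith
      _ ≤ ∑ i, |d i - dt i| * |h i| := by
          apply Finset.sum_le_sum
          intro i _
          calc (dt i - d i) * h i ≤ |(dt i - d i) * h i| := le_abs_self _
            _ = |d i - dt i| * |h i| := by rw [abs_mul, abs_sub_comm]
      _ ≤ ∑ i, |d i - dt i| * ((kappa W + 1) * h i0) := by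
          apply Finset.sum_le_sum
          intro i _
          exact mul_le_mul_of_nonneg_left (hbound i) (abs_nonneg _)
      _ = norm1 (d - dt) * ((kappa W + 1) * h i0) := by
          rw [← Finset.sum_mul, hnorm1]
  have hfinal := mul_lt_mul_of_pos_right hi0 hhi0pos
  nlinarith
end

section
/- Let A ∈ ℝ^{m×n}, W = ker(A), and let Â ∈ ℝ^{(m+n)×3n} be the block matrix Â = [[A, −A, 0],[I_n, −(1/2)I_n, I_n]], i.e., Â(x, y, z) = (Ax − Ay, x − (1/2)y + z) for (x,y,z) ∈ ℝ^n × ℝ^n × ℝ^n. Let Ŵ = ker(Â) ⊆ ℝ^{3n}. Then κ_{Ŵ} ≤ 4 κ_W. -/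
open scoped BigOperators

variable {ι : Type*} [Fintype ι] [DecidableEq ι]

section AuxForKappa

variable {ι : Type*} [Fintype ι] [DecidableEq ι]

lemma span_of_finrank_one {W : Submodule ℝ (ι → ℝ)} {C : Set ι}
    (h1 : Module.finrank ℝ ↥(W ⊓ coordSubspace C) = 1)
    {g : ι → ℝ} (hg : g ∈ W) (hs : ∀ i ∉ C, g i = 0) (hg0 : g ≠ 0)
    {v : ι → ℝ} (hv : v ∈ W) (hvs : ∀ i ∉ C, v i = 0) :
    ∃ c : ℝ, v = c • g := by
  have hgm : g ∈ W ⊓ coordSubspace C := ⟨hg, hs⟩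
  have hvm : v ∈ W ⊓ coordSubspace C := ⟨hv, hvs⟩
  obtain ⟨c, hc⟩ := (finrank_eq_one_iff_of_nonzero'
      (⟨g, hgm⟩ : ↥(W ⊓ coordSubspace C)) (by simpa using hg0)).mp h1 ⟨v, hvm⟩
  exact ⟨c, by simpa [eq_comm] using congrArg Subtype.val hc⟩

lemma exists_ne_zero_of_finrank_one {W : Submodule ℝ (ι → ℝ)} {C : Set ι}
    (h1 : Module.finrank ℝ ↥(W ⊓ coordSubspace C) = 1) :
    ∃ v : ι → ℝ, v ∈ W ∧ (∀ i ∉ C, v i = 0) ∧ v ≠ 0 := by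
  by_contra hcon
  push_neg at hcon
  have hbot : W ⊓ coordSubspace C = ⊥ := by
    rw [Submodule.eq_bot_iff]
    exact fun v hv => hcon v hv.1 hv.2
  rw [hbot] at h1
  simp [finrank_bot] at h1

lemma csSup_mul_image {D : Set ℝ} (hD : D.Finite) (hne : D.Nonempty) {c : ℝ} (hc : 0 < c) :
    sSup ((fun r => c * r) '' D) = c * sSup D := by
  apply IsGreatest.csSup_eq
  constructor
  · exact ⟨sSup D, hne.csSup_mem hD, rfl⟩
  · rintro r ⟨d, hd, rfl⟩
    exact mul_le_mul_of_nonneg_left (le_csSup hD.bddAbove hd) hc.le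

lemma csInf_mul_image {D : Set ℝ} (hD : D.Finite) (hne : D.Nonempty) {c : ℝ} (hc : 0 < c) :
    sInf ((fun r => c * r) '' D) = c * sInf D := by
  apply IsLeast.csInf_eq
  constructor
  · exact ⟨sInf D, hne.csInf_mem hD, rfl⟩
  · rintro r ⟨d, hd, rfl⟩
    exact mul_le_mul_of_nonneg_left (csInf_le hD.bddBelow hd) hc.le

lemma ratio_smul {g : ι → ℝ} {C : Set ι} (hne : C.Nonempty) {c : ℝ} (hc : c ≠ 0) :
    sSup ((fun i => |(c • g) i|) '' C) / sInf ((fun i => |(c • g) i|) '' C)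
      = sSup ((fun i => |g i|) '' C) / sInf ((fun i => |g i|) '' C) := by
  have himg : (fun i => |(c • g) i|) '' C
      = (fun r => |c| * r) '' ((fun i => |g i|) '' C) := by
    rw [← Set.image_comp]
    apply Set.image_congr
    intro i _
    simp [abs_mul]
  have hfin : ((fun i => |g i|) '' C).Finite := (C.toFinite).image _
  have hne' : ((fun i => |g i|) '' C).Nonempty := hne.image _
  have hcp : (0:ℝ) < |c| := abs_pos.mpr hc
  rw [himg, csSup_mul_image hfin hne' hcp, csInf_mul_image hfin hne' hcp,
    mul_div_mul_left _ _ (ne_of_gt hcp)]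

lemma kappaSet_finite (W : Submodule ℝ (ι → ℝ)) :
    (({1} : Set ℝ) ∪ {r | ∃ C : Set ι, IsCircuit W C ∧ ∃ g ∈ W, g ≠ 0 ∧ {i | g i ≠ 0} = C ∧
      r = sSup ((fun i => |g i|) '' C) / sInf ((fun i => |g i|) '' C)}).Finite := by
  apply Set.Finite.union (Set.finite_singleton 1)
  have hsub : {r | ∃ C : Set ι, IsCircuit W C ∧ ∃ g ∈ W, g ≠ 0 ∧ {i | g i ≠ 0} = C ∧
      r = sSup ((fun i => |g i|) '' C) / sInf ((fun i => |g i|) '' C)}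
      ⊆ ⋃ C ∈ {C : Set ι | IsCircuit W C},
        {r | ∃ g ∈ W, g ≠ 0 ∧ {i | g i ≠ 0} = C ∧
          r = sSup ((fun i => |g i|) '' C) / sInf ((fun i => |g i|) '' C)} := by
    rintro r ⟨C, hC, hrest⟩
    exact Set.mem_biUnion hC hrest
  apply Set.Finite.subset _ hsub
  apply Set.Finite.biUnion (Set.toFinite _)
  rintro C hC
  apply Set.Subsingleton.finite
  rintro r1 ⟨g1, hg1W, hg10, hs1, hr1⟩ r2 ⟨g2, hg2W, hg20, hs2, hr2⟩
  have hsupp1 : ∀ i ∉ C, g1 i = 0 := by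
    intro i hi
    by_contra hne
    exact hi (hs1 ▸ hne)
  have hsupp2 : ∀ i ∉ C, g2 i = 0 := by
    intro i hi
    by_contra hne
    exact hi (hs2 ▸ hne)
  obtain ⟨c, hc⟩ := span_of_finrank_one hC.1 hg1W hsupp1 hg10 hg2W hsupp2
  have hc0 : c ≠ 0 := by
    rintro rfl
    simp at hc
    exact hg20 hc
  have hCne : C.Nonempty := by
    obtain ⟨i, hi⟩ := Function.ne_iff.mp hg10
    exact ⟨i, hs1 ▸ hi⟩
  rw [hr1, hr2, hc, ratio_smul hCne hc0]

lemma one_le_kappa (W : Submodule ℝ (ι → ℝ)) : 1 ≤ kappa W :=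
  le_csSup (kappaSet_finite W).bddAbove (Set.mem_union_left _ rfl)

lemma ratio_le_kappa {W : Submodule ℝ (ι → ℝ)} {C : Set ι} (hC : IsCircuit W C)
    {g : ι → ℝ} (hg : g ∈ W) (hg0 : g ≠ 0) (hs : {i | g i ≠ 0} = C) :
    sSup ((fun i => |g i|) '' C) / sInf ((fun i => |g i|) '' C) ≤ kappa W :=
  le_csSup (kappaSet_finite W).bddAbove
    (Set.mem_union_right _ ⟨C, hC, g, hg, hg0, hs, rfl⟩)

lemma ratio_le {g : ι → ℝ} {C : Set ι} (hne : C.Nonempty) {a b : ℝ} (hb : 0 < b)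
    (hub : ∀ i ∈ C, |g i| ≤ a) (hlb : ∀ i ∈ C, b ≤ |g i|) :
    sSup ((fun i => |g i|) '' C) / sInf ((fun i => |g i|) '' C) ≤ a / b := by
  obtain ⟨i0, hi0⟩ := id hne
  have ha : 0 ≤ a := le_trans (le_trans hb.le (hlb i0 hi0)) (hub i0 hi0)
  have h1 : sSup ((fun i => |g i|) '' C) ≤ a := by
    apply csSup_le (hne.image _)
    rintro r ⟨i, hi, rfl⟩
    exact hub i hi
  have h2 : b ≤ sInf ((fun i => |g i|) '' C) := by
    apply le_csInf (hne.image _)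
    rintro r ⟨i, hi, rfl⟩
    exact hlb i hi
  exact div_le_div₀ ha h1 hb h2

end AuxForKappa

set_option maxHeartbeats 1600000

/-- the circuit imbalance of the kernel `Ŵ` of the initialization
block matrix `Â = [[A, −A, 0],[I, −½I, I]]` is at most `4 κ_{ker A}`. -/
theorem kappa_init_system {m n : ℕ} (A : Matrix (Fin m) (Fin n) ℝ)
    (What : Submodule ℝ ((Fin n ⊕ Fin n ⊕ Fin n) → ℝ))
    (hWhat : ∀ v : (Fin n ⊕ Fin n ⊕ Fin n) → ℝ, v ∈ What ↔
      (A.mulVec (fun i => v (Sum.inl i)) - A.mulVec (fun i => v (Sum.inr (Sum.inl i))) = 0 ∧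
       ∀ i, v (Sum.inl i) - (1 / 2) * v (Sum.inr (Sum.inl i)) + v (Sum.inr (Sum.inr i)) = 0)) :
    kappa What ≤ 4 * kappa (LinearMap.ker A.mulVecLin) := by
  classical
  set W := LinearMap.ker A.mulVecLin with hWdef
  have hk1 : (1:ℝ) ≤ kappa W := one_le_kappa W
  conv_lhs => unfold kappa
  refine csSup_le ⟨1, Set.mem_union_left _ (Set.mem_singleton 1)⟩ ?_
  rintro r (hr | ⟨C, hC, g, hgW, hg0, hsupp, hrr⟩)
  · rw [Set.mem_singleton_iff] at hr
    subst hr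
    linarith
  set x : Fin n → ℝ := fun i => g (Sum.inl i) with hxdef
  set y : Fin n → ℝ := fun i => g (Sum.inr (Sum.inl i)) with hydef
  set z : Fin n → ℝ := fun i => g (Sum.inr (Sum.inr i)) with hzdef
  set h : Fin n → ℝ := fun i => x i - y i with hhdef
  obtain ⟨hA, heq⟩ := (hWhat g).mp hgW
  have hA' : A.mulVec x - A.mulVec y = 0 := hA
  have heq' : ∀ i, x i - (1/2) * y i + z i = 0 := heq
  have hxi : ∀ i, x i = y i + h i := by
    intro i
    simp [hhdef]
  have hzi : ∀ i, z i = -(1/2) * y i - h i := by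
    intro i
    have := heq' i
    have hx := hxi i
    linarith
  have hhW : h ∈ W := by
    rw [hWdef, LinearMap.mem_ker]
    have hfun : h = x - y := rfl
    rw [hfun]
    show A.mulVec (x - y) = 0
    rw [Matrix.mulVec_sub]
    exact hA'
  have hmemC : ∀ jj, jj ∈ C ↔ g jj ≠ 0 := by
    intro jj
    rw [← hsupp]
    exact Iff.rfl
  have hsuppg : ∀ jj ∉ C, g jj = 0 := by
    intro jj hj
    by_contra hne
    exact hj ((hmemC jj).mpr hne)
  have hCne : C.Nonempty := by
    obtain ⟨jj, hjj⟩ := Function.ne_iff.mp hg0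
    exact ⟨jj, (hmemC jj).mpr hjj⟩
  have hspan : ∀ v ∈ What, (∀ jj ∉ C, v jj = 0) → ∃ c : ℝ, v = c • g :=
    fun v hv hvs => span_of_finrank_one hC.1 hgW hsuppg hg0 hv hvs
  by_cases hS3 : ∃ j, y j ≠ 0 ∧ h j ≠ -y j ∧ h j ≠ -y j / 2
  · -- the "free" case: the circuit is a single triple (e_j, e_j, -e_j/2)
    obtain ⟨j, hyj, hj1, hj2⟩ := hS3
    set v : (Fin n ⊕ Fin n ⊕ Fin n) → ℝ := Sum.elim (fun i => if i = j then (1:ℝ) else 0)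
      (Sum.elim (fun i => if i = j then (1:ℝ) else 0)
        (fun i => if i = j then -(1/2 : ℝ) else 0)) with hvdef
    have hvW : v ∈ What := by
      rw [hWhat]
      refine ⟨?_, ?_⟩
      · have : (fun i => v (Sum.inl i)) = (fun i => v (Sum.inr (Sum.inl i))) := rfl
        rw [this, sub_self]
      · intro i
        show (if i = j then (1:ℝ) else 0) - (1/2) * (if i = j then (1:ℝ) else 0)
          + (if i = j then -(1/2 : ℝ) else 0) = 0
        by_cases hij : i = j <;> simp [hij] <;> norm_num
    have hvs : ∀ jj ∉ C, v jj = 0 := by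
      intro jj hj
      by_contra hne
      apply hj
      rw [hmemC]
      rcases jj with i | i | i
      · have hij : i = j := by
          by_contra hij
          exact hne (by simp [hvdef, hij])
        subst hij
        show x i ≠ 0
        intro h0
        apply hj1
        have := hxi i
        linarith
      · have hij : i = j := by
          by_contra hij
          exact hne (by simp [hvdef, hij])
        subst hij
        exact hyj
      · have hij : i = j := by
          by_contra hij
          exact hne (by simp [hvdef, hij])
        subst hij
        show z i ≠ 0
        intro h0
        apply hj2
        have hz := hzi i
        rw [h0] at hz
        linarith
    obtain ⟨c, hc⟩ := hspan v hvW hvs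
    have h1c : (1:ℝ) = c * y j := by
      have := congrFun hc (Sum.inr (Sum.inl j))
      simpa [hvdef] using this
    have hc0 : c ≠ 0 := by
      rintro rfl
      simp at h1c
    have hginv : g = c⁻¹ • v := by
      rw [hc, smul_smul, inv_mul_cancel₀ hc0, one_smul]
    have hbounds : ∀ jj ∈ C, |c|⁻¹ / 2 ≤ |g jj| ∧ |g jj| ≤ |c|⁻¹ := by
      intro jj hjC
      have hgne := (hmemC jj).mp hjC
      have hval : g jj = c⁻¹ * v jj := by rw [hginv]; rfl
      have hvne : v jj ≠ 0 := by
        intro h0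
        rw [hval, h0, mul_zero] at hgne
        exact hgne rfl
      have habs : |g jj| = |c|⁻¹ * |v jj| := by
        rw [hval, abs_mul, abs_inv]
      have hcpos : (0:ℝ) < |c|⁻¹ := by positivity
      have hvcases : |v jj| = 1 ∨ |v jj| = 1/2 := by
        rcases jj with i | i | i <;> by_cases hij : i = j <;>
          simp [hvdef, hij] at hvne ⊢ <;> norm_num
      rcases hvcases with hv1 | hv1 <;> rw [habs, hv1] <;> constructor <;> nlinarith
    have hratio : sSup ((fun i => |g i|) '' C) / sInf ((fun i => |g i|) '' C)
        ≤ |c|⁻¹ / (|c|⁻¹ / 2) := by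
      apply ratio_le hCne (by positivity) (fun jj hj => (hbounds jj hj).2)
        (fun jj hj => (hbounds jj hj).1)
    have h2 : |c|⁻¹ / (|c|⁻¹ / 2) = 2 := by
      have : |c|⁻¹ ≠ 0 := by positivity
      field_simp
    rw [hrr]
    calc sSup ((fun i => |g i|) '' C) / sInf ((fun i => |g i|) '' C) ≤ 2 := by
          rw [← h2]; exact hratio
      _ ≤ 4 * kappa W := by linarith
  · -- the "interesting" case: the circuit comes from a circuit of W
    push_neg at hS3
    have hh0 : h ≠ 0 := by
      intro hh0
      have hy0 : ∀ j, y j = 0 := by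
        intro j
        by_contra hyj
        have h0 : h j = 0 := by rw [hh0]; rfl
        rcases em (h j = -y j) with he | he
        · rw [h0] at he; exact hyj (by linarith)
        · have := hS3 j hyj he
          rw [h0] at this
          exact hyj (by linarith)
      apply hg0
      funext jj
      rcases jj with i | i | i
      · show x i = 0
        have := hxi i
        have h0 : h i = 0 := by rw [hh0]; rfl
        rw [this, hy0 i, h0, add_zero]
      · exact hy0 i
      · show z i = 0
        have := hzi i
        have h0 : h i = 0 := by rw [hh0]; rfl
        rw [this, hy0 i, h0]
        ring
    set T : Set (Fin n) := {j | h j ≠ 0} with hTdef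
    have hhsT : ∀ j ∉ T, h j = 0 := fun j hj => not_not.mp hj
    -- the key lifting lemma
    have hkey : ∀ h' : Fin n → ℝ, h' ∈ W → (∀ j ∉ T, h' j = 0) → ∃ c : ℝ, h' = c • h := by
      intro h' hh'W hh's
      set y' : Fin n → ℝ := fun j =>
        if y j ≠ 0 ∧ h j = -y j then -h' j
        else if y j ≠ 0 ∧ h j = -y j / 2 then -2 * h' j else 0 with hy'def
      set v' : (Fin n ⊕ Fin n ⊕ Fin n) → ℝ := Sum.elim (fun j => y' j + h' j)
        (Sum.elim y' (fun j => -(1/2) * y' j - h' j)) with hv'def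
      have hy'e1 : ∀ i, (y i ≠ 0 ∧ h i = -y i) → y' i = -h' i := by
        intro i hc
        show (if y i ≠ 0 ∧ h i = -y i then -h' i
          else if y i ≠ 0 ∧ h i = -y i / 2 then -2 * h' i else 0) = -h' i
        rw [if_pos hc]
      have hy'e2 : ∀ i, ¬(y i ≠ 0 ∧ h i = -y i) → (y i ≠ 0 ∧ h i = -y i / 2) →
          y' i = -2 * h' i := by
        intro i hc1 hc2
        show (if y i ≠ 0 ∧ h i = -y i then -h' i
          else if y i ≠ 0 ∧ h i = -y i / 2 then -2 * h' i else 0) = -2 * h' i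
        rw [if_neg hc1, if_pos hc2]
      have hy'e3 : ∀ i, ¬(y i ≠ 0 ∧ h i = -y i) → ¬(y i ≠ 0 ∧ h i = -y i / 2) →
          y' i = 0 := by
        intro i hc1 hc2
        show (if y i ≠ 0 ∧ h i = -y i then -h' i
          else if y i ≠ 0 ∧ h i = -y i / 2 then -2 * h' i else 0) = 0
        rw [if_neg hc1, if_neg hc2]
      have hy'cases : ∀ j, y j = 0 → y' j = 0 := by
        intro j hyj
        exact hy'e3 j (fun hc => hc.1 hyj) (fun hc => hc.1 hyj)
      have hv'W : v' ∈ What := by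
        rw [hWhat]
        refine ⟨?_, ?_⟩
        · show A.mulVec (fun j => y' j + h' j) - A.mulVec y' = 0
          have hfun : (fun j => y' j + h' j) = y' + h' := rfl
          rw [hfun, Matrix.mulVec_add]
          have hz' : A.mulVec h' = 0 := hh'W
          rw [hz']
          ring
        · intro i
          show (y' i + h' i) - (1/2) * y' i + (-(1/2) * y' i - h' i) = 0
          ring
      have hv's : ∀ jj ∉ C, v' jj = 0 := by
        intro jj hj
        by_contra hne
        apply hj
        rw [hmemC]
        rcases jj with i | i | i
        · show x i ≠ 0
          have hne' : y' i + h' i ≠ 0 := hne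
          by_cases c1 : y i ≠ 0 ∧ h i = -y i
          · exfalso
            apply hne'
            rw [hy'e1 i c1]
            ring
          by_cases c2 : y i ≠ 0 ∧ h i = -y i / 2
          · have hy'i : y' i = -2 * h' i := hy'e2 i c1 c2
            have hx := hxi i
            rw [c2.2] at hx
            intro h0
            rw [h0] at hx
            have : y i = 0 := by linarith
            exact c2.1 this
          · have hy'i : y' i = 0 := hy'e3 i c1 c2
            rw [hy'i, zero_add] at hne'
            have hiT : i ∈ T := by
              by_contra hiT
              exact hne' (hh's i hiT)
            have hyi : y i = 0 := by
              by_contra hyi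
              rcases em (h i = -y i) with he | he
              · exact c1 ⟨hyi, he⟩
              · exact c2 ⟨hyi, hS3 i hyi he⟩
            have hx := hxi i
            rw [hyi, zero_add] at hx
            rw [hx]
            exact hiT
        · show y i ≠ 0
          have hne' : y' i ≠ 0 := hne
          by_contra hyi
          exact hne' (hy'cases i hyi)
        · show z i ≠ 0
          have hne' : -(1/2) * y' i - h' i ≠ 0 := hne
          by_cases c1 : y i ≠ 0 ∧ h i = -y i
          · have hy'i : y' i = -h' i := hy'e1 i c1
            have hz := hzi i
            rw [c1.2] at hz
            intro h0
            rw [h0] at hz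
            exact c1.1 (by linarith)
          by_cases c2 : y i ≠ 0 ∧ h i = -y i / 2
          · exfalso
            apply hne'
            rw [hy'e2 i c1 c2]
            ring
          · have hy'i : y' i = 0 := hy'e3 i c1 c2
            rw [hy'i] at hne'
            have hh'i : h' i ≠ 0 := by
              intro h0
              apply hne'
              rw [h0]
              ring
            have hiT : i ∈ T := by
              by_contra hiT
              exact hh'i (hh's i hiT)
            have hyi : y i = 0 := by
              by_contra hyi
              rcases em (h i = -y i) with he | he
              · exact c1 ⟨hyi, he⟩
              · exact c2 ⟨hyi, hS3 i hyi he⟩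
            have hz := hzi i
            rw [hyi] at hz
            intro h0
            rw [h0] at hz
            have hcon : h i = 0 := by linear_combination hz
            exact hiT hcon
      obtain ⟨c, hc⟩ := hspan v' hv'W hv's
      refine ⟨c, funext fun j => ?_⟩
      have e1 : y' j + h' j = c * x j := by
        have := congrFun hc (Sum.inl j)
        simpa [hv'def] using this
      have e2 : y' j = c * y j := by
        have := congrFun hc (Sum.inr (Sum.inl j))
        simpa [hv'def] using this
      have : h' j = c * (x j - y j) := by linarith
      simpa [hhdef] using this
    -- T is a circuit of W with circuit vector h
    have hhsub : h ∈ W ⊓ coordSubspace T := ⟨hhW, hhsT⟩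
    have hT1 : Module.finrank ℝ ↥(W ⊓ coordSubspace T) = 1 := by
      apply (finrank_eq_one_iff_of_nonzero' (⟨h, hhsub⟩ : ↥(W ⊓ coordSubspace T))
        (by simpa using hh0)).mpr
      rintro ⟨w, hwW, hws⟩
      obtain ⟨c, hc⟩ := hkey w hwW hws
      exact ⟨c, Subtype.ext hc.symm⟩
    have hT2 : ∀ T' : Set (Fin n), T' ⊂ T → Module.finrank ℝ ↥(W ⊓ coordSubspace T') ≠ 1 := by
      intro T' hT' he1
      obtain ⟨u, huW, hus, hu0⟩ := exists_ne_zero_of_finrank_one he1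
      have husT : ∀ j ∉ T, u j = 0 := fun j hj => hus j (fun hmem => hj (hT'.1 hmem))
      obtain ⟨c, hc⟩ := hkey u huW husT
      have hc0 : c ≠ 0 := by
        rintro rfl
        simp at hc
        exact hu0 hc
      obtain ⟨j, hjT, hjT'⟩ := Set.exists_of_ssubset hT'
      have : u j = 0 := hus j hjT'
      rw [hc] at this
      have hhj : h j ≠ 0 := hjT
      simp at this
      rcases this with h' | h'
      · exact hc0 h'
      · exact hhj h'
    have hTcirc : IsCircuit W T := ⟨hT1, hT2⟩
    have hρ : sSup ((fun j => |h j|) '' T) / sInf ((fun j => |h j|) '' T) ≤ kappa W :=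
      ratio_le_kappa hTcirc hhW hh0 rfl
    set M : ℝ := sSup ((fun j => |h j|) '' T) with hMdef
    set m : ℝ := sInf ((fun j => |h j|) '' T) with hmdef
    have hTne : T.Nonempty := by
      obtain ⟨j, hj⟩ := Function.ne_iff.mp hh0
      exact ⟨j, hj⟩
    have hfinT : ((fun j => |h j|) '' T).Finite := (T.toFinite).image _
    have hneT : ((fun j => |h j|) '' T).Nonempty := hTne.image _
    have hmpos : 0 < m := by
      obtain ⟨j, hjT, hjv⟩ := hneT.csInf_mem hfinT
      rw [hmdef, ← hjv]
      exact abs_pos.mpr hjT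
    have hMub : ∀ j ∈ T, |h j| ≤ M := fun j hj => le_csSup hfinT.bddAbove ⟨j, hj, rfl⟩
    have hmlb : ∀ j ∈ T, m ≤ |h j| := fun j hj => csInf_le hfinT.bddBelow ⟨j, hj, rfl⟩
    have hMpos : 0 < M := lt_of_lt_of_le hmpos (csInf_le_csSup hneT hfinT.bddBelow hfinT.bddAbove)
    -- coordinate bounds
    have hbounds : ∀ jj ∈ C, m / 2 ≤ |g jj| ∧ |g jj| ≤ 2 * M := by
      intro jj hjC
      have hgne := (hmemC jj).mp hjC
      rcases jj with i | i | i
      · have hxne : x i ≠ 0 := hgne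
        have hgx : |g (Sum.inl i)| = |x i| := rfl
        rw [hgx]
        by_cases hyi : y i = 0
        · have hxh : x i = h i := by
            have := hxi i
            rw [hyi, zero_add] at this
            exact this
          have hiT : i ∈ T := by
            show h i ≠ 0
            rw [← hxh]
            exact hxne
          rw [hxh]
          exact ⟨by linarith [hmlb i hiT], by linarith [hMub i hiT, hMpos]⟩
        · rcases em (h i = -y i) with he | he
          · exfalso
            apply hxne
            rw [hxi i, he]
            ring
          · have he2 := hS3 i hyi he
            have hxv : x i = -h i := by
              rw [hxi i, he2]
              ring
            have hiT : i ∈ T := by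
              show h i ≠ 0
              intro h0
              rw [h0] at he2
              exact hyi (by linarith)
            rw [hxv, abs_neg]
            exact ⟨by linarith [hmlb i hiT], by linarith [hMub i hiT, hMpos]⟩
      · have hyne : y i ≠ 0 := hgne
        have hgy : |g (Sum.inr (Sum.inl i))| = |y i| := rfl
        rw [hgy]
        rcases em (h i = -y i) with he | he
        · have hyv : y i = -h i := by rw [he]; ring
          have hiT : i ∈ T := by
            show h i ≠ 0
            intro h0
            rw [h0] at hyv
            exact hyne (by linarith)
          rw [hyv, abs_neg]
          exact ⟨by linarith [hmlb i hiT], by linarith [hMub i hiT, hMpos]⟩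
        · have he2 := hS3 i hyne he
          have hyv : y i = -2 * h i := by rw [he2]; ring
          have hiT : i ∈ T := by
            show h i ≠ 0
            intro h0
            rw [h0] at hyv
            exact hyne (by linarith)
          rw [hyv]
          rw [abs_mul]
          have h2 : |(-2 : ℝ)| = 2 := by norm_num
          rw [h2]
          exact ⟨by linarith [hmlb i hiT, hmpos], by linarith [hMub i hiT]⟩
      · have hzne : z i ≠ 0 := hgne
        have hgz : |g (Sum.inr (Sum.inr i))| = |z i| := rfl
        rw [hgz]
        by_cases hyi : y i = 0
        · have hzv : z i = -h i := by
            rw [hzi i, hyi]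
            ring
          have hiT : i ∈ T := by
            show h i ≠ 0
            intro h0
            apply hzne
            rw [hzv, h0, neg_zero]
          rw [hzv, abs_neg]
          exact ⟨by linarith [hmlb i hiT], by linarith [hMub i hiT, hMpos]⟩
        · rcases em (h i = -y i) with he | he
          · have hzv : z i = -(1/2) * h i := by
              rw [hzi i]
              rw [he]
              ring
            have hiT : i ∈ T := by
              show h i ≠ 0
              intro h0
              rw [h0] at he
              exact hyi (by linarith)
            rw [hzv, abs_mul]
            have h2 : |(-(1/2) : ℝ)| = 1/2 := by norm_num
            rw [h2]
            exact ⟨by linarith [hmlb i hiT], by linarith [hMub i hiT, hMpos, hmpos]⟩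
          · have he2 := hS3 i hyi he
            exfalso
            apply hzne
            rw [hzi i, he2]
            ring
    have hratio : sSup ((fun i => |g i|) '' C) / sInf ((fun i => |g i|) '' C)
        ≤ (2 * M) / (m / 2) :=
      ratio_le hCne (by positivity) (fun jj hj => (hbounds jj hj).2)
        (fun jj hj => (hbounds jj hj).1)
    have hcomp : (2 * M) / (m / 2) = 4 * (M / m) := by
      field_simp
      ring
    rw [hrr]
    calc sSup ((fun i => |g i|) '' C) / sInf ((fun i => |g i|) '' C)
        ≤ 4 * (M / m) := by rw [← hcomp]; exact hratio
      _ ≤ 4 * kappa W := by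
          apply mul_le_mul_of_nonneg_left _ (by norm_num)
          rw [hMdef, hmdef]
          exact hρ
end
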